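/- arXiv:1412.1208 — 3 statements merged into one kernel-verified Lean document; each statement's English description precedes it below -/
import Mathlib

section
/- Let $(G,H)$ be a discrete Hecke pair that is relatively unimodular, i.e., $L(x) = R(x)$ for all $x \in G$, where $L(x) = [H : H \cap xHx^{-1}]$ and $R(x) = L(x^{-1})$. Then $l_c(g) := \log L(g)$ defines a length function on $G$ whose kernel contains $H$. Moreover, $l_c(g) = 0$ if and only if $g$ belongs to the normalizer $N_G(H)$ of $H$ in $G$. -/
open Subgroup

/-- A length function on a group `G`. -/
def IsLengthFun {G : Type*} [Group G] (l : G → ℝ) : Prop :=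
  (∀ g, 0 ≤ l g) ∧ l 1 = 0 ∧ (∀ g : G, l g⁻¹ = l g) ∧ ∀ g h : G, l (g * h) ≤ l g + l h

/-- `L(x) = [H : H ∩ xHx⁻¹]` (as `Subgroup.relindex`; `0` when infinite). -/
noncomputable def heckeL {G : Type*} [Group G] (H : Subgroup G) (x : G) : ℕ :=
  (H.map (MulAut.conj x).toMonoidHom).relIndex H

lemma relIndex_map_conj {G : Type*} [Group G] (x : G) (A B : Subgroup G) :
    (A.map (MulAut.conj x).toMonoidHom).relIndex (B.map (MulAut.conj x).toMonoidHom)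
      = A.relIndex B := by
  have hinj : Function.Injective (MulAut.conj x).toMonoidHom := (MulAut.conj x).injective
  rw [← relIndex_comap, comap_map_eq_self_of_injective hinj]

lemma conj_map_mul {G : Type*} [Group G] (x y : G) (H : Subgroup G) :
    H.map (MulAut.conj (x * y)).toMonoidHom
      = (H.map (MulAut.conj y).toMonoidHom).map (MulAut.conj x).toMonoidHom := by
  rw [map_map]
  congr 1
  ext g
  simp [MulAut.conj, mul_assoc]

lemma heckeL_submul {G : Type*} [Group G] (H : Subgroup G)
    (hfin : ∀ x : G, heckeL H x ≠ 0) (x y : G) :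
    heckeL H (x * y) ≤ heckeL H x * heckeL H y := by
  set Cx := H.map (MulAut.conj x).toMonoidHom with hCx
  set Cy := H.map (MulAut.conj y).toMonoidHom with hCy
  set Cxy := H.map (MulAut.conj (x * y)).toMonoidHom with hCxy
  have hmap : Cxy = Cy.map (MulAut.conj x).toMonoidHom := conj_map_mul x y H
  have hconj : Cxy.relIndex Cx = heckeL H y := by
    rw [hmap, hCx, relIndex_map_conj]; rfl
  have h0 : (Cx ⊓ Cxy).relIndex H ≠ 0 := relIndex_inf_ne_zero (hfin x) (hfin (x * y))
  have h1 : heckeL H (x * y) ≤ (Cx ⊓ Cxy).relIndex H :=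
    Subgroup.relIndex_le_of_le_left inf_le_right h0
  have h2 : ((Cx ⊓ Cxy) ⊓ H).relIndex (Cx ⊓ H) * (Cx ⊓ H).relIndex H
      = ((Cx ⊓ Cxy) ⊓ H).relIndex H :=
    relIndex_mul_relIndex _ _ _ (inf_le_inf_right H inf_le_left) inf_le_right
  have h3 : ((Cx ⊓ Cxy) ⊓ H).relIndex H = (Cx ⊓ Cxy).relIndex H := inf_relIndex_right _ _
  have h4 : (Cx ⊓ H).relIndex H = heckeL H x := inf_relIndex_right _ _
  have h5 : ((Cx ⊓ Cxy) ⊓ H).relIndex (Cx ⊓ H) = Cxy.relIndex (Cx ⊓ H) := by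
    rw [show (Cx ⊓ Cxy) ⊓ H = Cxy ⊓ (Cx ⊓ H) by rw [inf_comm Cx Cxy, inf_assoc]]
    exact inf_relIndex_right _ _
  have h6 : Cxy.relIndex (Cx ⊓ H) ≤ Cxy.relIndex Cx :=
    relIndex_le_of_le_right inf_le_left (by rw [hconj]; exact hfin y)
  calc heckeL H (x * y) ≤ (Cx ⊓ Cxy).relIndex H := h1
    _ = Cxy.relIndex (Cx ⊓ H) * heckeL H x := by rw [← h3, ← h2, h5, h4]
    _ ≤ heckeL H y * heckeL H x := by
        rw [hconj] at h6; exact Nat.mul_le_mul_right _ h6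
    _ = heckeL H x * heckeL H y := mul_comm _ _

lemma map_conj_eq_iff {G : Type*} [Group G] (H : Subgroup G) (g : G) :
    H.map (MulAut.conj g).toMonoidHom = H ↔ g ∈ Subgroup.normalizer (H : Set G) := by
  rw [Subgroup.mem_normalizer_iff]
  constructor
  · intro he h
    constructor
    · intro hh
      rw [← he]
      exact ⟨h, hh, rfl⟩
    · intro hh
      rw [← he] at hh
      obtain ⟨a, ha, hae⟩ := hh
      simp only [MulEquiv.coe_toMonoidHom, MulAut.conj_apply] at hae
      have : a = h := by
        have h1 := congrArg (fun z => g⁻¹ * z * g) hae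
        simpa [mul_assoc] using h1
      rwa [← this]
  · intro hn
    ext k
    simp only [Subgroup.mem_map, MulEquiv.coe_toMonoidHom, MulAut.conj_apply]
    constructor
    · rintro ⟨a, ha, rfl⟩
      exact (hn a).mp ha
    · intro hk
      refine ⟨g⁻¹ * k * g, ?_, by group⟩
      have := (hn (g⁻¹ * k * g)).mpr
      apply this
      have : g * (g⁻¹ * k * g) * g⁻¹ = k := by group
      rwa [this]

lemma heckeL_eq_one_of_le {G : Type*} [Group G] {H : Subgroup G} {g : G}
    (h : H ≤ H.map (MulAut.conj g).toMonoidHom) : heckeL H g = 1 :=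
  Subgroup.relIndex_eq_one.mpr h

theorem characteristic_length_function {G : Type*} [Group G] (H : Subgroup G)
    (hfin : ∀ x : G, heckeL H x ≠ 0)
    (hunimod : ∀ x : G, heckeL H x = heckeL H x⁻¹) :
    IsLengthFun (fun g : G => Real.log (heckeL H g)) ∧
    (∀ h ∈ H, Real.log (heckeL H h) = 0) ∧
    (∀ g : G, Real.log (heckeL H g) = 0 ↔ g ∈ Subgroup.normalizer (H : Set G)) := by
  have hone : ∀ g : G, (1 : ℝ) ≤ (heckeL H g : ℝ) := by
    intro g
    exact_mod_cast Nat.one_le_iff_ne_zero.mpr (hfin g)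
  have hnonneg : ∀ g : G, 0 ≤ Real.log (heckeL H g) := fun g => Real.log_nonneg (hone g)
  have heq1 : ∀ g : G, Real.log (heckeL H g) = 0 ↔ heckeL H g = 1 := by
    intro g
    constructor
    · intro h
      rcases Real.log_eq_zero.mp h with h' | h' | h'
      · exact absurd h' (by exact_mod_cast hfin g)
      · exact_mod_cast h'
      · exfalso; linarith [hone g]
    · intro h; rw [h]; simp
  have hLone : ∀ g : G, heckeL H g = 1 ↔ H ≤ H.map (MulAut.conj g).toMonoidHom := by
    intro g; exact Subgroup.relIndex_eq_one
  have hnormal : ∀ g : G, heckeL H g = 1 ↔ g ∈ Subgroup.normalizer (H : Set G) := by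
    intro g
    constructor
    · intro h1
      have h2 : heckeL H g⁻¹ = 1 := by rw [← hunimod]; exact h1
      have hle1 : H ≤ H.map (MulAut.conj g).toMonoidHom := (hLone g).mp h1
      have hle2 : H ≤ H.map (MulAut.conj g⁻¹).toMonoidHom := (hLone g⁻¹).mp h2
      rw [← map_conj_eq_iff]
      apply le_antisymm _ hle1
      intro k hk
      obtain ⟨a, ha, rfl⟩ := hk
      obtain ⟨b, hb, hba⟩ := hle2 ha
      simp only [MulEquiv.coe_toMonoidHom, MulAut.conj_apply] at hba ⊢
      rw [← hba]
      have : g * (g⁻¹ * b * g⁻¹⁻¹) * g⁻¹ = b := by group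
      rwa [this]
    · intro hg
      rw [hLone, (map_conj_eq_iff H g).mpr hg]
  refine ⟨⟨hnonneg, ?_, ?_, ?_⟩, ?_, ?_⟩
  · rw [heq1, hnormal]
    exact (Subgroup.normalizer (H : Set G)).one_mem
  · intro g; simp only; rw [← hunimod g]
  · intro g h
    simp only
    have hsub := heckeL_submul H hfin g h
    have hg0 : (heckeL H g : ℝ) ≠ 0 := ne_of_gt (by linarith [hone g])
    have hh0 : (heckeL H h : ℝ) ≠ 0 := ne_of_gt (by linarith [hone h])
    calc Real.log (heckeL H (g * h)) ≤ Real.log ((heckeL H g : ℝ) * heckeL H h) := by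
          apply Real.log_le_log (by linarith [hone (g * h)])
          exact_mod_cast hsub
      _ = Real.log (heckeL H g) + Real.log (heckeL H h) := Real.log_mul hg0 hh0
  · intro h hh
    rw [heq1, hnormal]
    exact Subgroup.le_normalizer hh
  · intro g
    rw [heq1, hnormal]
end

section
/- Let $H$ be a compact subgroup of a locally compact group $G$ with Haar measure $\eta$ on $H$, and let $l$ be a length function on $G$ that is bounded on $H$. Define $l_1(g) := \int_H l(hgh^{-1})\, d\eta(h)$. Then $l_1$ is a length function on $G$ satisfying $l_1(hg) = l_1(gh)$ for all $g \in G$, $h \in H$, and $l_1$ is equivalent to $l$; in particular $l_1(g) \le \eta(H) l(g) + 2\int_H l(h) d\eta(h)$ and $l(g) \le \frac{1}{\eta(H)} l_1(g) + \frac{2}{\eta(H)} \int_H l(h) d\eta(h)$ for all $g \in G$. -/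
open MeasureTheory
open scoped ENNReal NNReal

theorem haar_right_inv {K : Type*} [Group K] [TopologicalSpace K] [IsTopologicalGroup K]
    [CompactSpace K] [MeasurableSpace K] [BorelSpace K] (μ : Measure K) [μ.IsHaarMeasure] :
    μ.IsMulRightInvariant := by
  constructor
  intro g
  set μ' := Measure.map (· * g) μ with hμ'
  haveI : IsFiniteMeasure μ := CompactSpace.isFiniteMeasure
  haveI : IsFiniteMeasure μ' := by
    constructor
    rw [hμ', Measure.map_apply (measurable_mul_const g) MeasurableSet.univ]
    exact measure_lt_top μ _
  set c : ℝ≥0 := Measure.haarScalarFactor μ' μ with hcdef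
  have hc : μ' = c • μ := Measure.isMulInvariant_eq_smul_of_compactSpace μ' μ
  have huniv : μ' Set.univ = μ Set.univ := by
    rw [hμ', Measure.map_apply (measurable_mul_const g) MeasurableSet.univ, Set.preimage_univ]
  have h0 : μ Set.univ ≠ 0 := (isOpen_univ.measure_pos μ ⟨1, trivial⟩).ne'
  have ht : μ Set.univ ≠ ⊤ := measure_ne_top μ _
  have hmul : (c : ℝ≥0∞) * μ Set.univ = 1 * μ Set.univ := by
    rw [one_mul]
    conv_rhs => rw [← huniv, hc]
    rw [Measure.smul_apply, ENNReal.smul_def, smul_eq_mul]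
  have h1 : (c : ℝ≥0∞) = 1 := (ENNReal.mul_left_inj h0 ht).1 hmul
  have h2 : c = 1 := by exact_mod_cast h1
  rw [hc, h2, one_smul]

theorem averaged_length_function {G : Type*} [Group G] [TopologicalSpace G]
    [IsTopologicalGroup G] [LocallyCompactSpace G] [MeasurableSpace G] [BorelSpace G]
    (H : Subgroup G) [CompactSpace H]
    (η : Measure H) [η.IsHaarMeasure]
    (l : G → ℝ) (hl : IsLengthFun l) (hBorel : Measurable l)
    (hbdd : ∃ C : ℝ, ∀ h : H, l (h : G) ≤ C) :
    let l₁ : G → ℝ := fun g => ∫ h : H, l ((h : G) * g * (h : G)⁻¹) ∂η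
    IsLengthFun l₁ ∧
    (∀ (g : G) (h : H), l₁ ((h : G) * g) = l₁ (g * (h : G))) ∧
    (∀ g : G, l₁ g ≤ (η Set.univ).toReal * l g + 2 * ∫ h : H, l (h : G) ∂η) ∧
    (∀ g : G, l g ≤ (1 / (η Set.univ).toReal) * l₁ g +
      (2 / (η Set.univ).toReal) * ∫ h : H, l (h : G) ∂η) ∧
    (∃ c₁ c₀ : ℝ, 0 ≤ c₁ ∧ 0 ≤ c₀ ∧ ∀ g : G, l₁ g ≤ c₁ * l g + c₀) ∧
    (∃ c₁' c₀' : ℝ, 0 ≤ c₁' ∧ 0 ≤ c₀' ∧ ∀ g : G, l g ≤ c₁' * l₁ g + c₀') := by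
  intro l₁
  obtain ⟨hpos, hone, hinv, hsub⟩ := hl
  obtain ⟨C, hC⟩ := hbdd
  haveI : BorelSpace ↥H := Subtype.borelSpace (H : Set G)
  haveI : IsFiniteMeasure η := CompactSpace.isFiniteMeasure
  haveI : η.IsMulRightInvariant := haar_right_inv η
  have hlinv' : ∀ h : H, l ((h : G)⁻¹) ≤ C := fun h => by
    rw [hinv]; exact hC h
  -- measurability of the integrand
  have meas : ∀ g : G, Measurable (fun h : H => l ((h : G) * g * (h : G)⁻¹)) := by
    intro g
    exact hBorel.comp
      (((continuous_subtype_val.mul continuous_const).mul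
        continuous_subtype_val.inv).measurable)
  have meas0 : Measurable (fun h : H => l (h : G)) :=
    hBorel.comp continuous_subtype_val.measurable
  -- integrability
  have integ0 : Integrable (fun h : H => l (h : G)) η := by
    apply (integrable_const C).mono' meas0.aestronglyMeasurable
    filter_upwards with h
    rw [Real.norm_eq_abs, abs_of_nonneg (hpos _)]
    exact hC h
  have bound : ∀ (g : G) (h : H), l ((h : G) * g * (h : G)⁻¹) ≤ l g + 2 * C := by
    intro g h
    have h1 := hsub ((h : G) * g) ((h : G)⁻¹)
    have h2 := hsub (h : G) g
    have h3 := hC h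
    have h4 := hlinv' h
    linarith
  have integ : ∀ g : G, Integrable (fun h : H => l ((h : G) * g * (h : G)⁻¹)) η := by
    intro g
    apply (integrable_const (l g + 2 * C)).mono' (meas g).aestronglyMeasurable
    filter_upwards with h
    rw [Real.norm_eq_abs, abs_of_nonneg (hpos _)]
    exact bound g h
  have Inn : 0 ≤ ∫ h : H, l (h : G) ∂η := integral_nonneg fun h => hpos _
  -- length function properties
  have l1pos : ∀ g : G, 0 ≤ l₁ g := fun g => integral_nonneg fun h => hpos _
  have l1one : l₁ 1 = 0 := by
    simp only [l₁, mul_one]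
    simp [hone]
  have l1inv : ∀ g : G, l₁ g⁻¹ = l₁ g := by
    intro g
    simp only [l₁]
    congr 1
    funext h
    have e : (h : G) * g⁻¹ * (h : G)⁻¹ = ((h : G) * g * (h : G)⁻¹)⁻¹ := by group
    rw [e, hinv]
  have l1sub : ∀ g g' : G, l₁ (g * g') ≤ l₁ g + l₁ g' := by
    intro g g'
    simp only [l₁]
    rw [← integral_add (integ g) (integ g')]
    apply integral_mono (integ (g * g')) ((integ g).add (integ g'))
    intro h
    have e : (h : G) * (g * g') * (h : G)⁻¹
        = ((h : G) * g * (h : G)⁻¹) * ((h : G) * g' * (h : G)⁻¹) := by group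
    have : l ((h : G) * (g * g') * (h : G)⁻¹)
        ≤ l ((h : G) * g * (h : G)⁻¹) + l ((h : G) * g' * (h : G)⁻¹) :=
      le_of_eq_of_le (congrArg l e) (hsub _ _)
    exact this
  -- conjugation invariance
  have lcomm : ∀ (g : G) (h : H), l₁ ((h : G) * g) = l₁ (g * (h : G)) := by
    intro g h
    have key := integral_mul_right_eq_self (μ := η)
      (fun k : H => l ((k : G) * ((h : G) * g) * (k : G)⁻¹)) h⁻¹
    have eq1 : (fun k : H => l (((k * h⁻¹ : H) : G) * ((h : G) * g) * ((k * h⁻¹ : H) : G)⁻¹))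
        = fun k : H => l ((k : G) * (g * (h : G)) * (k : G)⁻¹) := by
      funext k
      congr 1
      push_cast
      group
    simp only [l₁]
    rw [← key]
    exact congrArg (fun f => ∫ k, f k ∂η) eq1
  -- upper bound
  have upper : ∀ g : G, l₁ g ≤ (η Set.univ).toReal * l g + 2 * ∫ h : H, l (h : G) ∂η := by
    intro g
    have step : l₁ g ≤ ∫ h : H, (l g + 2 * l (h : G)) ∂η := by
      apply integral_mono (integ g) ((integrable_const (l g)).add (integ0.const_mul 2))
      intro h
      show l ((h : G) * g * (h : G)⁻¹) ≤ l g + 2 * l (h : G)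
      have h1 := hsub ((h : G) * g) ((h : G)⁻¹)
      have h2 := hsub (h : G) g
      have h4 : l ((h : G)⁻¹) = l (h : G) := hinv _
      linarith
    calc l₁ g ≤ ∫ h : H, (l g + 2 * l (h : G)) ∂η := step
      _ = (η Set.univ).toReal * l g + 2 * ∫ h : H, l (h : G) ∂η := by
          rw [integral_add (integrable_const (l g)) (integ0.const_mul 2),
            integral_const, integral_const_mul, smul_eq_mul]; rfl
  -- positivity of total mass
  have h0 : (η Set.univ) ≠ 0 := (isOpen_univ.measure_pos η ⟨1, trivial⟩).ne'
  have tpos : 0 < (η Set.univ).toReal :=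
    ENNReal.toReal_pos h0 (measure_ne_top η _)
  -- lower bound
  have lower : ∀ g : G, l g ≤ (1 / (η Set.univ).toReal) * l₁ g +
      (2 / (η Set.univ).toReal) * ∫ h : H, l (h : G) ∂η := by
    intro g
    have step0 : (∫ _ : H, l g ∂η)
        ≤ ∫ h : H, (l ((h : G) * g * (h : G)⁻¹) + 2 * l (h : G)) ∂η := by
      apply integral_mono (integrable_const (l g)) ((integ g).add (integ0.const_mul 2))
      intro h
      show l g ≤ l ((h : G) * g * (h : G)⁻¹) + 2 * l (h : G)
      have e : g = (h : G)⁻¹ * ((h : G) * g * (h : G)⁻¹) * (h : G) := by group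
      have h1 : l g ≤ l ((h : G)⁻¹ * ((h : G) * g * (h : G)⁻¹)) + l (h : G) :=
        le_of_eq_of_le (congrArg l e) (hsub _ _)
      have h2 : l ((h : G)⁻¹ * ((h : G) * g * (h : G)⁻¹))
          ≤ l ((h : G)⁻¹) + l ((h : G) * g * (h : G)⁻¹) := hsub _ _
      have h4 : l ((h : G)⁻¹) = l (h : G) := hinv _
      linarith
    have e1 : (∫ _ : H, l g ∂η) = (η Set.univ).toReal * l g := by
      rw [integral_const, smul_eq_mul]; rfl
    have e2 : (∫ h : H, (l ((h : G) * g * (h : G)⁻¹) + 2 * l (h : G)) ∂η)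
        = l₁ g + 2 * ∫ h : H, l (h : G) ∂η := by
      rw [integral_add (integ g) (integ0.const_mul 2), integral_const_mul]
    have step : (η Set.univ).toReal * l g ≤ l₁ g + 2 * ∫ h : H, l (h : G) ∂η := by
      rw [← e1, ← e2]; exact step0
    rw [div_mul_eq_mul_div, div_mul_eq_mul_div, one_mul, ← add_div, le_div_iff₀ tpos]
    linarith
  refine ⟨⟨l1pos, l1one, l1inv, l1sub⟩, lcomm, upper, lower,
    ⟨(η Set.univ).toReal, 2 * ∫ h : H, l (h : G) ∂η, ENNReal.toReal_nonneg,
      by linarith, upper⟩,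
    ⟨1 / (η Set.univ).toReal, (2 / (η Set.univ).toReal) * ∫ h : H, l (h : G) ∂η,
      by positivity, by positivity, lower⟩⟩
end

section
/- Let $H$ be a compact subgroup of a locally compact group $G$, and let $l_1$ be a length function on $G$ bounded on $H$ and satisfying $l_1(hg) = l_1(gh)$ for all $g \in G$, $h \in H$. Define $l'(g) := \inf_{h, h' \in H} l_1(hgh')$. Then $l'(g) = \inf_{h \in H} l_1(hg) = \inf_{h \in H} l_1(gh)$ for all $g$, $l'$ is a length function on $G$ whose kernel contains $H$, and $l'$ is equivalent to $l_1$. -/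
theorem infimized_length_function {G : Type*} [Group G] [TopologicalSpace G]
    [IsTopologicalGroup G] [LocallyCompactSpace G]
    (H : Subgroup G) [CompactSpace H]
    (l₁ : G → ℝ) (hl₁ : IsLengthFun l₁)
    (hbdd : ∃ C : ℝ, ∀ h : H, l₁ (h : G) ≤ C)
    (hcomm : ∀ (g : G) (h : H), l₁ ((h : G) * g) = l₁ (g * (h : G))) :
    let l' : G → ℝ := fun g => ⨅ p : H × H, l₁ ((p.1 : G) * g * (p.2 : G))
    (∀ g : G, l' g = ⨅ h : H, l₁ ((h : G) * g)) ∧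
    (∀ g : G, l' g = ⨅ h : H, l₁ (g * (h : G))) ∧
    IsLengthFun l' ∧
    (∀ h ∈ H, l' h = 0) ∧
    (∃ c₁ c₀ : ℝ, 0 ≤ c₁ ∧ 0 ≤ c₀ ∧ ∀ g : G, l' g ≤ c₁ * l₁ g + c₀) ∧
    (∃ c₁' c₀' : ℝ, 0 ≤ c₁' ∧ 0 ≤ c₀' ∧ ∀ g : G, l₁ g ≤ c₁' * l' g + c₀') := by
  obtain ⟨hpos, hone, hinv, htri⟩ := hl₁
  obtain ⟨C, hC⟩ := hbdd
  have hC0 : 0 ≤ C := by have := hC 1; simpa [hone] using this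
  intro l'
  have bddp : ∀ g : G, BddBelow (Set.range fun p : H × H => l₁ ((p.1 : G) * g * (p.2 : G))) := by
    intro g; exact ⟨0, by rintro x ⟨p, rfl⟩; exact hpos _⟩
  have bddl : ∀ g : G, BddBelow (Set.range fun h : H => l₁ ((h : G) * g)) := by
    intro g; exact ⟨0, by rintro x ⟨h, rfl⟩; exact hpos _⟩
  have bddr : ∀ g : G, BddBelow (Set.range fun h : H => l₁ (g * (h : G))) := by
    intro g; exact ⟨0, by rintro x ⟨h, rfl⟩; exact hpos _⟩
  -- key rewritings
  have keyl : ∀ (g : G) (p : H × H),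
      l₁ ((p.1 : G) * g * (p.2 : G)) = l₁ (((p.2 * p.1 : H) : G) * g) := by
    intro g p
    have := (hcomm ((p.1 : G) * g) p.2).symm
    push_cast
    rw [mul_assoc]
    simpa [mul_assoc] using this
  have keyr : ∀ (g : G) (p : H × H),
      l₁ ((p.1 : G) * g * (p.2 : G)) = l₁ (g * ((p.2 * p.1 : H) : G)) := by
    intro g p
    have := hcomm (g * (p.2 : G)) p.1
    push_cast
    rw [mul_assoc] at this ⊢
    simpa [mul_assoc] using this
  -- first two claims
  have eql : ∀ g : G, l' g = ⨅ h : H, l₁ ((h : G) * g) := by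
    intro g
    apply le_antisymm
    · refine le_ciInf fun h => ?_
      have := ciInf_le (bddp g) (h, 1)
      simpa using this
    · refine le_ciInf fun p => ?_
      rw [keyl g p]
      exact ciInf_le (bddl g) (p.2 * p.1)
  have eqr : ∀ g : G, l' g = ⨅ h : H, l₁ (g * (h : G)) := by
    intro g
    apply le_antisymm
    · refine le_ciInf fun h => ?_
      have := ciInf_le (bddp g) (1, h)
      simpa using this
    · refine le_ciInf fun p => ?_
      rw [keyr g p]
      exact ciInf_le (bddr g) (p.2 * p.1)
  have hl'pos : ∀ g : G, 0 ≤ l' g := fun g => le_ciInf fun p => hpos _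
  have hl'le : ∀ g : G, l' g ≤ l₁ g := by
    intro g
    have := ciInf_le (bddp g) (1, 1)
    simpa using this
  refine ⟨eql, eqr, ⟨hl'pos, ?_, ?_, ?_⟩, ?_, ⟨1, 0, zero_le_one, le_refl 0, ?_⟩,
    ⟨1, 2 * C, zero_le_one, by linarith, ?_⟩⟩
  · exact le_antisymm (by simpa [hone] using hl'le 1) (hl'pos 1)
  · -- symmetry
    intro g
    rw [eql g⁻¹, eqr g]
    apply le_antisymm
    · refine le_ciInf fun h => ?_
      have : l₁ ((h⁻¹ : H) * g⁻¹ : G) = l₁ (g * (h : G)) := by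
        rw [← hinv (g * (h : G))]; push_cast; rw [mul_inv_rev]
      exact (ciInf_le (bddl g⁻¹) h⁻¹).trans_eq this
    · refine le_ciInf fun h => ?_
      have : l₁ (g * ((h⁻¹ : H) : G)) = l₁ ((h : G) * g⁻¹) := by
        rw [← hinv ((h : G) * g⁻¹)]; push_cast; rw [mul_inv_rev, inv_inv]
      exact (ciInf_le (bddr g) h⁻¹).trans_eq this
  · -- triangle
    intro g k
    rw [eql g, eqr k]
    refine le_ciInf_add_ciInf fun h h' => ?_
    calc l' (g * k) ≤ l₁ ((h : G) * (g * k) * (h' : G)) := ciInf_le (bddp _) (h, h')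
      _ = l₁ (((h : G) * g) * (k * (h' : G))) := by group
      _ ≤ l₁ ((h : G) * g) + l₁ (k * (h' : G)) := htri _ _
  · -- kernel
    intro h hh
    refine le_antisymm ?_ (hl'pos h)
    rw [eql h]
    have := ciInf_le (bddl h) ⟨h, hh⟩⁻¹
    simpa [hone] using this
  · intro g; simpa using hl'le g
  · intro g
    rw [one_mul]
    have : l₁ g - 2 * C ≤ l' g := by
      refine le_ciInf fun p => ?_
      have h1 : l₁ g ≤ l₁ ((p.1 : G)⁻¹) + l₁ ((p.1 : G) * g * (p.2 : G)) + l₁ ((p.2 : G)⁻¹) := by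
        have := htri ((p.1 : G)⁻¹ * ((p.1 : G) * g * (p.2 : G))) ((p.2 : G)⁻¹)
        have h2 := htri ((p.1 : G)⁻¹) ((p.1 : G) * g * (p.2 : G))
        calc l₁ g = l₁ ((p.1 : G)⁻¹ * ((p.1 : G) * g * (p.2 : G)) * (p.2 : G)⁻¹) := by
              group
          _ ≤ l₁ ((p.1 : G)⁻¹ * ((p.1 : G) * g * (p.2 : G))) + l₁ ((p.2 : G)⁻¹) := this
          _ ≤ l₁ ((p.1 : G)⁻¹) + l₁ ((p.1 : G) * g * (p.2 : G)) + l₁ ((p.2 : G)⁻¹) := by linarith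
      have c1 : l₁ ((p.1 : G)⁻¹) ≤ C := by rw [hinv]; exact hC p.1
      have c2 : l₁ ((p.2 : G)⁻¹) ≤ C := by rw [hinv]; exact hC p.2
      linarith
    linarith
end
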